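/- Let p : ℝ → [0,∞) be a Lebesgue probability density with finite first moment and mean zero (∫ |y| p(y) dy < ∞ and ∫ y p(y) dy = 0), let F_p(x) = ∫_{−∞}^x p(y) dy be its cumulative distribution function, and let s := p * r be the convolution of p with the ReLU function r(t) = max(0, t). Then for every x ∈ ℝ, s(x) = ∫_{−∞}^x F_p(y) dy. -/

import Mathlib

open MeasureTheory Filter Topology Set

/-- For a mean-zero probability density `p` on `ℝ` with finite first moment and CDF `F_p`,
the convolution `s := p * r` of `p` with ReLU satisfies `s(x) = ∫_{−∞}^x F_p(y) dy`. -/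
theorem softplus_eq_integral_of_cdf
    (p : ℝ → ℝ) (hp0 : ∀ y, 0 ≤ p y)
    (hint : Integrable p) (hprob : ∫ y, p y = 1)
    (hmom : Integrable (fun y => |y| * p y))
    (hmean : ∫ y, y * p y = 0) :
    ∀ x : ℝ,
      ∫ y, max (x - y) 0 * p y = ∫ y in Iic x, (∫ t in Iic y, p t) := by
  intro x
  set S : Set (ℝ × ℝ) := {q | q.1 ≤ q.2 ∧ q.2 ≤ x} with hS
  have hSm : MeasurableSet S :=
    (measurableSet_le measurable_fst measurable_snd).inter
      (measurableSet_le measurable_snd measurable_const)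
  set f : ℝ × ℝ → ℝ := S.indicator (fun q => p q.1) with hf
  have hmeas : AEStronglyMeasurable f (volume.prod volume) :=
    (hint.aestronglyMeasurable.comp_fst).indicator hSm
  -- sections in the first variable
  have hsec1 : ∀ (t y : ℝ), f (t, y) = (Icc t x).indicator (fun _ => p t) y := by
    intro t y
    simp only [hf, Set.indicator_apply, hS, Set.mem_setOf_eq, Set.mem_Icc]
  have hsecint : ∀ t : ℝ, Integrable (fun y => f (t, y)) := by
    intro t
    have : (fun y => f (t, y)) = (Icc t x).indicator (fun _ => p t) := funext (hsec1 t)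
    rw [this, integrable_indicator_iff measurableSet_Icc]
    exact integrableOn_const measure_Icc_lt_top.ne
  have hnorm : ∀ t : ℝ, (∫ y, ‖f (t, y)‖) = max (x - t) 0 * p t := by
    intro t
    have h1 : (fun y => ‖f (t, y)‖) = (Icc t x).indicator (fun _ => ‖p t‖) := by
      funext y
      rw [hsec1 t y, norm_indicator_eq_indicator_norm]
    rw [h1, integral_indicator measurableSet_Icc, setIntegral_const, measureReal_def,
      Real.volume_Icc, smul_eq_mul, ENNReal.toReal_ofReal', Real.norm_eq_abs,
      abs_of_nonneg (hp0 t)]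
  have hnormint : Integrable (fun t => ∫ y, ‖f (t, y)‖) := by
    have hdom : Integrable (fun t : ℝ => |x| * p t + |t| * p t) :=
      (hint.const_mul |x|).add hmom
    apply hdom.mono'
    · refine AEStronglyMeasurable.congr ?_ (ae_of_all _ fun t => (hnorm t).symm)
      exact ((continuous_const.sub continuous_id).max continuous_const).aestronglyMeasurable.mul
        hint.aestronglyMeasurable
    · refine ae_of_all _ fun t => ?_
      rw [hnorm t, Real.norm_eq_abs, abs_of_nonneg (mul_nonneg (le_max_right _ _) (hp0 t))]
      have h1 : max (x - t) 0 ≤ |x| + |t| := by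
        rcases max_cases (x - t) 0 with ⟨h, _⟩ | ⟨h, _⟩ <;> rw [h]
        · calc x - t ≤ |x - t| := le_abs_self _
            _ ≤ |x| + |t| := abs_sub _ _
        · positivity
      calc max (x - t) 0 * p t ≤ (|x| + |t|) * p t :=
            mul_le_mul_of_nonneg_right h1 (hp0 t)
        _ = |x| * p t + |t| * p t := by ring
  have hfint : Integrable f (volume.prod volume) :=
    (integrable_prod_iff hmeas).2 ⟨ae_of_all _ hsecint, hnormint⟩
  have hswap := integral_integral_swap (f := fun t y => f (t, y)) (by exact hfint)
  -- left iterated integral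
  have hleft : (∫ t, ∫ y, f (t, y)) = ∫ y, max (x - y) 0 * p y := by
    refine integral_congr_ae (ae_of_all _ fun t => ?_)
    show (∫ y, f (t, y)) = max (x - t) 0 * p t
    simp_rw [hsec1]
    rw [integral_indicator measurableSet_Icc, setIntegral_const, measureReal_def,
      Real.volume_Icc, smul_eq_mul, ENNReal.toReal_ofReal']
  -- sections in the second variable
  have hsec2 : ∀ (y t : ℝ), f (t, y) = if y ≤ x then (Iic y).indicator p t else 0 := by
    intro y t
    simp only [hf, Set.indicator_apply, hS, Set.mem_setOf_eq, Set.mem_Iic]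
    split_ifs <;> tauto
  have hright : (∫ y, ∫ t, f (t, y)) = ∫ y in Iic x, (∫ t in Iic y, p t) := by
    rw [← integral_indicator measurableSet_Iic]
    refine integral_congr_ae (ae_of_all _ fun y => ?_)
    show (∫ t, f (t, y)) = (Iic x).indicator (fun y => ∫ t in Iic y, p t) y
    simp_rw [hsec2 y]
    by_cases hyx : y ≤ x
    · simp only [if_pos hyx, Set.indicator_of_mem (Set.mem_Iic.2 hyx),
        integral_indicator measurableSet_Iic]
    · simp only [if_neg hyx, Set.indicator_of_notMem (fun h => hyx (Set.mem_Iic.1 h)),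
        integral_zero]
  rw [← hleft, hswap, hright]
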